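/- Let P = (E, ρ) be a (q,m)-demi-polymatroid of rank K = ρ(E), and let p, i, j be integers such that 1 ≤ p + i·m ≤ mn − K and 1 ≤ p + K + j·m ≤ K. Then d_{p+im}(P*) ≠ n + 1 − d_{p+K+jm}(P). -/

import Mathlib

set_option linter.unusedSectionVars false
set_option synthInstance.maxHeartbeats 1000000
set_option maxHeartbeats 1000000

open Module Matrix

variable {F : Type*} [Field F] [Fintype F] {n : ℕ}

/-- The orthogonal complement of a subspace of `𝔽_q^n` with respect to the standard dot product. -/
def perp (X : Submodule F (Fin n → F)) : Submodule F (Fin n → F) where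
  carrier := {x | ∀ y ∈ X, dotProduct x y = 0}
  add_mem' := fun {a b} ha hb y hy => by
    rw [Set.mem_setOf_eq] at *
    rw [add_dotProduct, ha y hy, hb y hy, add_zero]
  zero_mem' := fun y hy => zero_dotProduct y
  smul_mem' := fun c a ha y hy => by
    rw [Set.mem_setOf_eq] at *
    rw [smul_dotProduct, ha y hy, smul_zero]

/-- The dual rank function `ρ*(X) = ρ(X^⊥) + m·dim X − ρ(E)`. -/
noncomputable def dualRho (m : ℕ) (rho : Submodule F (Fin n → F) → ℤ) (X : Submodule F (Fin n → F)) : ℤ :=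
  rho (perp X) + (m : ℤ) * (finrank F X : ℤ) - rho ⊤

/-- The nullity function `ν(X) = m·dim X − ρ(X)`. -/
noncomputable def nullity (m : ℕ) (rho : Submodule F (Fin n → F) → ℤ) (X : Submodule F (Fin n → F)) : ℤ :=
  (m : ℤ) * (finrank F X : ℤ) - rho X

/-- The conullity function `ν*(X) = ρ(E) − ρ(X^⊥)`. -/
def coNull (rho : Submodule F (Fin n → F) → ℤ) (X : Submodule F (Fin n → F)) : ℤ :=
  rho ⊤ - rho (perp X)

/-- The `r`-th generalized weight `d_r = min{dim X : ν*(X) ≥ r}`. -/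
noncomputable def genW (rho : Submodule F (Fin n → F) → ℤ) (r : ℤ) : ℕ :=
  sInf {d : ℕ | ∃ X : Submodule F (Fin n → F), finrank F X = d ∧ r ≤ coNull rho X}

/-- `h(x) = max{ν(X) : dim X = x}`. -/
noncomputable def hFun (m : ℕ) (rho : Submodule F (Fin n → F) → ℤ) (x : ℕ) : ℤ :=
  sSup {v : ℤ | ∃ X : Submodule F (Fin n → F), finrank F X = x ∧ v = nullity m rho X}

/-- `h*(x) = max{ν*(X) : dim X = x}`. -/
noncomputable def hStar (rho : Submodule F (Fin n → F) → ℤ) (x : ℕ) : ℤ :=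
  sSup {v : ℤ | ∃ X : Submodule F (Fin n → F), finrank F X = x ∧ v = coNull rho X}

/-- A `(q,m)`-polymatroid on `E = 𝔽_q^n`. -/
structure QMPolymatroid (F : Type*) [Field F] [Fintype F] (n m : ℕ) where
  rho : Submodule F (Fin n → F) → ℤ
  rho_nonneg : ∀ X, 0 ≤ rho X
  rho_le : ∀ X, rho X ≤ (m : ℤ) * (finrank F X : ℤ)
  rho_mono : ∀ ⦃X Y⦄, X ≤ Y → rho X ≤ rho Y
  rho_submodular : ∀ X Y, rho (X ⊔ Y) + rho (X ⊓ Y) ≤ rho X + rho Y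

/-- A `(q,m)`-demi-polymatroid on `E = 𝔽_q^n`. -/
structure QMDemiPolymatroid (F : Type*) [Field F] [Fintype F] (n m : ℕ) where
  rho : Submodule F (Fin n → F) → ℤ
  rho_nonneg : ∀ X, 0 ≤ rho X
  rho_le : ∀ X, rho X ≤ (m : ℤ) * (finrank F X : ℤ)
  rho_mono : ∀ ⦃X Y⦄, X ≤ Y → rho X ≤ rho Y
  dual_nonneg : ∀ X, 0 ≤ dualRho m rho X
  dual_le : ∀ X, dualRho m rho X ≤ (m : ℤ) * (finrank F X : ℤ)
  dual_mono : ∀ ⦃X Y⦄, X ≤ Y → dualRho m rho X ≤ dualRho m rho Y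

section Codes

variable {m : ℕ}

/-- The row space of a matrix. -/
def rowSpace (A : Matrix (Fin m) (Fin n) F) : Submodule F (Fin n → F) :=
  Submodule.span F (Set.range A)

theorem rowSpace_le_iff (A : Matrix (Fin m) (Fin n) F) (X : Submodule F (Fin n → F)) :
    rowSpace A ≤ X ↔ ∀ i, A i ∈ X := by
  rw [rowSpace, Submodule.span_le]; exact Set.range_subset_iff

/-- Matrices whose row space is contained in `X`. -/
def supportedOn (m : ℕ) (X : Submodule F (Fin n → F)) :
    Submodule F (Matrix (Fin m) (Fin n) F) where
  carrier := {A | rowSpace A ≤ X}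
  add_mem' := fun {A B} hA hB => by
    rw [Set.mem_setOf_eq, rowSpace_le_iff] at *
    exact fun i => X.add_mem (hA i) (hB i)
  zero_mem' := by
    rw [Set.mem_setOf_eq, rowSpace_le_iff]
    exact fun i => X.zero_mem
  smul_mem' := fun c A hA => by
    rw [Set.mem_setOf_eq, rowSpace_le_iff] at *
    exact fun i => X.smul_mem c (hA i)

/-- `C(X)`: the subspace of a Delsarte code `C` of matrices whose row space lies in `X`. -/
def subcode (C : Submodule F (Matrix (Fin m) (Fin n) F)) (X : Submodule F (Fin n → F)) :
    Submodule F (Matrix (Fin m) (Fin n) F) :=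
  C ⊓ supportedOn m X

/-- The rank function `ρ_C(X) = dim C − dim C(X^⊥)` of a Delsarte code. -/
noncomputable def rhoC (C : Submodule F (Matrix (Fin m) (Fin n) F))
    (X : Submodule F (Fin n → F)) : ℤ :=
  (finrank F C : ℤ) - (finrank F (subcode C (perp X)) : ℤ)

/-- The generalized weight `d_r(C) = min{dim X : dim C(X) ≥ r}` of a Delsarte code. -/
noncomputable def codeWeight (C : Submodule F (Matrix (Fin m) (Fin n) F)) (r : ℤ) : ℕ :=
  sInf {d : ℕ | ∃ X : Submodule F (Fin n → F),
    finrank F X = d ∧ r ≤ (finrank F (subcode C X) : ℤ)}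

/-- The trace dual of a Delsarte code. -/
def traceDual (C : Submodule F (Matrix (Fin m) (Fin n) F)) :
    Submodule F (Matrix (Fin m) (Fin n) F) where
  carrier := {N | ∀ M ∈ C, Matrix.trace (M * Nᵀ) = 0}
  add_mem' := fun {N₁ N₂} h1 h2 M hM => by
    rw [Matrix.transpose_add, Matrix.mul_add, Matrix.trace_add, h1 M hM, h2 M hM, add_zero]
  zero_mem' := fun M hM => by simp
  smul_mem' := fun c N hN M hM => by
    rw [Matrix.transpose_smul, Matrix.mul_smul, Matrix.trace_smul, hN M hM, smul_zero]

/-- The transposed code `Cᵀ = {Mᵗ : M ∈ C}` of a code of square matrices. -/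
def transposeCode (C : Submodule F (Matrix (Fin n) (Fin n) F)) :
    Submodule F (Matrix (Fin n) (Fin n) F) where
  carrier := {A | Aᵀ ∈ C}
  add_mem' := fun {A B} hA hB => by
    rw [Set.mem_setOf_eq, Matrix.transpose_add]; exact C.add_mem hA hB
  zero_mem' := by
    rw [Set.mem_setOf_eq, Matrix.transpose_zero]; exact C.zero_mem
  smul_mem' := fun c A hA => by
    rw [Set.mem_setOf_eq, Matrix.transpose_smul]; exact C.smul_mem c hA

/-- The maximum rank of a matrix in a subspace of matrices. -/
noncomputable def maxrank (A : Submodule F (Matrix (Fin m) (Fin n) F)) : ℕ :=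
  sSup {r : ℕ | ∃ M ∈ A, M.rank = r}

/-- An optimal anticode: a subspace `𝒜` of `𝕄` with `dim 𝒜 = m · maxrank 𝒜`. -/
def IsOptimalAnticode (A : Submodule F (Matrix (Fin m) (Fin n) F)) : Prop :=
  finrank F A = m * maxrank A

/-- Ravagnani's generalized weight `a_r(C)`. -/
noncomputable def aWeight (C : Submodule F (Matrix (Fin m) (Fin n) F)) (r : ℤ) : ℕ :=
  (sInf {d : ℕ | ∃ A : Submodule F (Matrix (Fin m) (Fin n) F),
    IsOptimalAnticode A ∧ finrank F A = d ∧ r ≤ (finrank F (A ⊓ C : Submodule F _) : ℤ)}) / m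

end Codes

lemma mem_perp {X : Submodule F (Fin n → F)} {x : Fin n → F} :
    x ∈ perp X ↔ ∀ y ∈ X, dotProduct x y = 0 := Iff.rfl

lemma toDual_eq_dot (x y : Fin n → F) :
    (Pi.basisFun F (Fin n)).toDual x y = dotProduct x y := by
  conv_lhs => rw [← (Pi.basisFun F (Fin n)).sum_repr y]
  simp only [map_sum, _root_.map_smul, smul_eq_mul]
  rw [dotProduct]
  congr 1
  ext i
  rw [Basis.toDual_apply_left, Pi.basisFun_repr, Pi.basisFun_repr, mul_comm]

lemma perp_eq_comap (X : Submodule F (Fin n → F)) :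
    perp X = X.dualAnnihilator.comap
      ((Pi.basisFun F (Fin n)).toDualEquiv : (Fin n → F) →ₗ[F] Module.Dual F (Fin n → F)) := by
  ext x
  simp [mem_perp, Submodule.mem_comap, Submodule.mem_dualAnnihilator,
    Basis.toDualEquiv_apply, toDual_eq_dot]

lemma finrank_perp (X : Submodule F (Fin n → F)) :
    finrank F (perp X) + finrank F X = n := by
  have h0 : finrank F (perp X) = finrank F X.dualAnnihilator := by
    rw [perp_eq_comap]
    exact (LinearEquiv.ofSubmodule' (Pi.basisFun F (Fin n)).toDualEquiv X.dualAnnihilator).finrank_eq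
  rw [h0]
  have h1 : finrank F ((Fin n → F) ⧸ X) = finrank F X.dualAnnihilator :=
    (Subspace.quotEquivAnnihilator X).finrank_eq
  have h2 := Submodule.finrank_quotient_add_finrank X
  have h3 : finrank F (Fin n → F) = n := Module.finrank_fin_fun F
  omega

lemma perp_perp (X : Submodule F (Fin n → F)) : perp (perp X) = X := by
  have hle : X ≤ perp (perp X) := by
    intro x hx y hy
    rw [dotProduct_comm]
    exact hy x hx
  have h1 := finrank_perp (perp X)
  have h2 := finrank_perp X
  exact (Submodule.eq_of_le_of_finrank_le hle (by omega)).symm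

lemma perp_bot : perp (⊥ : Submodule F (Fin n → F)) = ⊤ := by
  rw [eq_top_iff]
  intro x _ y hy
  rw [Submodule.mem_bot] at hy
  subst hy
  simp

lemma perp_top : perp (⊤ : Submodule F (Fin n → F)) = ⊥ := by
  have h := finrank_perp (⊤ : Submodule F (Fin n → F))
  rw [finrank_top] at h
  rw [Module.finrank_fin_fun F] at h
  exact Submodule.finrank_eq_zero.mp (by omega)

/-- Wei-type duality for `(q,m)`-demi-polymatroids:
`d_{p+im}(P*) ≠ n + 1 − d_{p+K+jm}(P)`. -/
theorem demi_partial_wei_duality {F : Type*} [Field F] [Fintype F] {n m : ℕ}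
    (P : QMDemiPolymatroid F n m) (p i j : ℤ)
    (h1 : 1 ≤ p + i * m) (h2 : p + i * m ≤ (m : ℤ) * (n : ℤ) - P.rho ⊤)
    (h3 : 1 ≤ p + P.rho ⊤ + j * m) (h4 : p + P.rho ⊤ + j * m ≤ P.rho ⊤) :
    (genW (dualRho m P.rho) (p + i * m) : ℤ)
      ≠ (n : ℤ) + 1 - (genW P.rho (p + P.rho ⊤ + j * m) : ℤ) := by
  
  intro hEq
  set K := P.rho ⊤ with hK
  set r := p + i * m with hr
  set s := p + K + j * m with hs
  have hρbot : P.rho ⊥ = 0 := le_antisymm (by simpa using P.rho_le ⊥) (P.rho_nonneg ⊥)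
  have htop : (finrank F (⊤ : Submodule F (Fin n → F)) : ℤ) = (n : ℤ) := by
    rw [finrank_top, Module.finrank_fin_fun F]
  have hdimZ : ∀ X : Submodule F (Fin n → F),
      (finrank F (perp X) : ℤ) = (n : ℤ) - (finrank F X : ℤ) := by
    intro X; have h := finrank_perp X; omega
  have hcoNull : ∀ X : Submodule F (Fin n → F),
      coNull P.rho X = K - P.rho (perp X) := fun X => rfl
  have hcoNullDual : ∀ X : Submodule F (Fin n → F),
      coNull (dualRho m P.rho) X = (m : ℤ) * (finrank F X : ℤ) - P.rho X := by
    intro X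
    simp only [coNull, dualRho, perp_top, perp_perp, hρbot, ← hK]
    have h := hdimZ X
    rw [htop, h]
    ring
  -- the set for genW P.rho s
  set S : Set ℕ := {d : ℕ | ∃ X : Submodule F (Fin n → F),
      finrank F X = d ∧ s ≤ coNull P.rho X} with hSdef
  set T : Set ℕ := {d : ℕ | ∃ X : Submodule F (Fin n → F),
      finrank F X = d ∧ r ≤ coNull (dualRho m P.rho) X} with hTdef
  have hSne : S.Nonempty := by
    refine ⟨n, ⊤, ?_, ?_⟩
    · exact_mod_cast htop
    · rw [hcoNull, perp_top, hρbot]; linarith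
  have hTne : T.Nonempty := by
    refine ⟨n, ⊤, ?_, ?_⟩
    · exact_mod_cast htop
    · rw [hcoNullDual, htop]; linarith
  have hgS : genW P.rho s = sInf S := rfl
  have hgT : genW (dualRho m P.rho) r = sInf T := rfl
  set d := sInf S with hd
  obtain ⟨X, hXdim, hXs⟩ := Nat.sInf_mem hSne
  rw [← hd] at hXdim
  have hdn : d ≤ n := by
    have := finrank_perp X
    omega
  have hd1 : 1 ≤ d := by
    by_contra h
    push_neg at h
    have hd0 : d = 0 := by omega
    rw [hd0] at hXdim
    have hXbot : X = ⊥ := Submodule.finrank_eq_zero.mp hXdim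
    rw [hXbot, hcoNull, perp_bot] at hXs
    simp only [← hK] at hXs
    linarith
  -- e := sInf T = n + 1 - d
  set e := sInf T with he
  have heval : (e : ℤ) = (n : ℤ) + 1 - (d : ℤ) := by
    rw [hgT, hgS] at hEq
    exact hEq
  -- Fact A : perp X shows bound
  have hA : ¬ ((n - d : ℕ) ∈ T) := by
    apply Nat.notMem_of_lt_sInf
    omega
  have hApX : coNull (dualRho m P.rho) (perp X) < r := by
    by_contra h
    push_neg at h
    exact hA ⟨perp X, by have := finrank_perp X; omega, h⟩
  rw [hcoNullDual] at hApX
  have hpXdim : (finrank F (perp X) : ℤ) = (n : ℤ) - (d : ℤ) := by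
    rw [hdimZ, hXdim]
  rw [hpXdim] at hApX
  rw [hcoNull] at hXs
  -- Fact B : Y of dimension e with large dual conullity
  obtain ⟨Y, hYdim, hYr⟩ := Nat.sInf_mem hTne
  rw [← he] at hYdim
  rw [hcoNullDual] at hYr
  have hYdimZ : (finrank F Y : ℤ) = (n : ℤ) + 1 - (d : ℤ) := by
    rw [hYdim]; exact heval
  rw [hYdimZ] at hYr
  have hB : ¬ ((d - 1 : ℕ) ∈ S) := by
    apply Nat.notMem_of_lt_sInf
    omega
  have hBpY : coNull P.rho (perp Y) < s := by
    by_contra h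
    push_neg at h
    refine hB ⟨perp Y, ?_, h⟩
    have h1 := finrank_perp Y
    have h2 : (finrank F Y : ℤ) = (n : ℤ) + 1 - (d : ℤ) := hYdimZ
    omega
  rw [hcoNull, perp_perp] at hBpY
  -- final arithmetic
  set D := (d : ℤ) with hD
  have key1 : 1 ≤ (i - j - ((n : ℤ) - D)) * m := by
    have hlm : (i - j - ((n : ℤ) - D)) * m = r - s + K - (m : ℤ) * ((n : ℤ) - D) := by
      rw [hr, hs]; ring
    rw [hlm]
    linarith
  have key2 : (i - j - ((n : ℤ) - D)) * m ≤ (m : ℤ) - 1 := by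
    have hlm : (i - j - ((n : ℤ) - D)) * m = r - s + K - (m : ℤ) * ((n : ℤ) - D) := by
      rw [hr, hs]; ring
    rw [hlm]
    linarith
  have hm0 : (0 : ℤ) ≤ m := Int.natCast_nonneg m
  have hl1 : 1 ≤ i - j - ((n : ℤ) - D) := by
    by_contra h
    push_neg at h
    have : (i - j - ((n : ℤ) - D)) * m ≤ 0 :=
      mul_nonpos_of_nonpos_of_nonneg (by linarith) hm0
    linarith
  have : (m : ℤ) ≤ (i - j - ((n : ℤ) - D)) * m := le_mul_of_one_le_left hm0 hl1
  linarith
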